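/- Fix integers k ≥ 1 and n > k. The following three quantities are equal: (i) the infimum over all m ≥ 1 and type distributions G over m types for n agents of sup_{J∈{1,...,m}, ρ∈(0,1]} innerLP^{OST(J,ρ)/Proph}_{k,n}(G); (ii) the infimum over all m and G of sup_{J,ρ} innerLP^{OST(J,ρ)/ExAnte}_{k,n}(G); (iii) the infimum over all m and G of sup_{J,ρ} min{ P(Σ_{i=1}^{n-1} X_i(J,ρ) < k), E[min{Σ_{i=1}^{n-1} X_i(J,ρ), k}]/k }, where X_1(J,ρ), ..., X_{n-1}(J,ρ) are independent Bernoulli random variables with success probabilities τ_i(J,ρ) = (1-ρ)·G_{i,J-1} + ρ·G_{iJ}. -/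

import Mathlib

open Finset

/-- The polytope `P(k,n)` of state/acceptance probability vectors. -/
def memP (k n : ℕ) (x y : ℕ → ℕ → ℝ) : Prop :=
  x 1 k = 1 ∧
  (∀ l, 1 ≤ l → l < k → x 1 l = 0) ∧
  (∀ i ∈ Finset.Icc 2 n, ∀ l ∈ Finset.Icc 1 k,
    x i l = x (i-1) l - y (i-1) l + (if l < k then y (i-1) (l+1) else 0)) ∧
  (∀ i ∈ Finset.Icc 1 n, ∀ l ∈ Finset.Icc 1 k, 0 ≤ y i l ∧ y i l ≤ x i l)

/-- `G` is a valid family of type distributions over `m` types for `n` agents. -/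
def IsTypeDist (n m : ℕ) (G : ℕ → ℕ → ℝ) : Prop :=
  ∀ i ∈ Finset.Icc 1 n, G i 0 = 0 ∧ G i m = 1 ∧ ∀ j ∈ Finset.Icc 1 m, G i (j-1) ≤ G i j

/-- `E[min{X_1+...+X_t, k}]` for independent Bernoulli `X_i` with success probabilities `p i`. -/
noncomputable def eMinBer (p : ℕ → ℝ) (t k : ℕ) : ℝ :=
  ∑ S ∈ (Finset.Icc 1 t).powerset,
    (∏ i ∈ S, p i) * (∏ i ∈ Finset.Icc 1 t \ S, (1 - p i)) * min (S.card : ℝ) (k : ℝ)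

/-- `P(X_1+...+X_t < k)` for independent Bernoulli `X_i` with success probabilities `p i`. -/
noncomputable def probLt (p : ℕ → ℝ) (t k : ℕ) : ℝ :=
  ∑ S ∈ (Finset.Icc 1 t).powerset.filter (fun S => S.card < k),
    (∏ i ∈ S, p i) * ∏ i ∈ Finset.Icc 1 t \ S, (1 - p i)

noncomputable def QProph (k n : ℕ) (G : ℕ → ℕ → ℝ) (j : ℕ) : ℝ :=
  eMinBer (fun i => G i j) n k

noncomputable def QExAnte (k n : ℕ) (G : ℕ → ℕ → ℝ) (j : ℕ) : ℝ :=
  min (∑ i ∈ Finset.Icc 1 n, G i j) (k : ℝ)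

noncomputable def coverSum (k n : ℕ) (G : ℕ → ℕ → ℝ) (j : ℕ) (x y : ℕ → ℕ → ℝ) : ℝ :=
  ∑ i ∈ Finset.Icc 1 n, ∑ l ∈ Finset.Icc 1 k, min (y i l) (G i j * x i l)

/-- `τ_i(J,ρ)`. -/
noncomputable def tauOf (G : ℕ → ℕ → ℝ) (J : ℕ) (ρ : ℝ) (i : ℕ) : ℝ :=
  (1 - ρ) * G i (J-1) + ρ * G i J

/-- The simplified dual LP `innerLP^{OST(J,ρ)/·}_{k,n}(G)` with coefficients `Q`. -/
noncomputable def innerLP_OST (k n m : ℕ) (G : ℕ → ℕ → ℝ) (J : ℕ) (ρ : ℝ) (Q : ℕ → ℝ) : ℝ :=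
  sSup {θ : ℝ | ∃ x y, memP k n x y ∧
    (∀ i ∈ Finset.Icc 1 n, ∀ l ∈ Finset.Icc 1 k, y i l = tauOf G J ρ i * x i l) ∧
    ∀ j ∈ Finset.Icc 1 m, θ * Q j ≤ coverSum k n G j x y}

/-- Theorem `chawlaTight`: the worst-case OST guarantees relative to the prophet
and to the ex-ante relaxation coincide, and both equal the worst-case value of
`sup_{J,ρ} min{P(Σ_{i<n} Ber(τ_i(J,ρ)) < k), E[min{Σ_{i<n} Ber(τ_i(J,ρ)), k}]/k}`. -/
lemma Icc_succ_ins (t:ℕ) : Finset.Icc 1 (t+1) = insert (t+1) (Finset.Icc 1 t) := by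
  ext x; simp [Finset.mem_Icc]; omega

lemma sum_pw_succ (p : ℕ → ℝ) (t : ℕ) (g : ℕ → ℝ) :
    ∑ S ∈ (Icc 1 (t+1)).powerset, (∏ i ∈ S, p i) * (∏ i ∈ Icc 1 (t+1) \ S, (1 - p i)) * g S.card
    = (1 - p (t+1)) * (∑ S ∈ (Icc 1 t).powerset, (∏ i ∈ S, p i) * (∏ i ∈ Icc 1 t \ S, (1 - p i)) * g S.card)
      + p (t+1) * (∑ S ∈ (Icc 1 t).powerset, (∏ i ∈ S, p i) * (∏ i ∈ Icc 1 t \ S, (1 - p i)) * g (S.card + 1)) := by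
  have hnot : (t+1) ∉ Icc 1 t := by simp
  rw [Icc_succ_ins, Finset.sum_powerset_insert hnot]
  rw [Finset.mul_sum, Finset.mul_sum]
  congr 1
  · apply Finset.sum_congr rfl
    intro S hS
    simp only [Finset.mem_powerset] at hS
    have h1 : insert (t+1) (Icc 1 t) \ S = insert (t+1) (Icc 1 t \ S) := by
      ext x
      simp only [Finset.mem_sdiff, Finset.mem_insert]
      constructor
      · rintro ⟨h|h, h2⟩
        · exact Or.inl h
        · exact Or.inr ⟨h, h2⟩
      · rintro (h|⟨h,h2⟩)
        · refine ⟨Or.inl h, fun hx => hnot ?_⟩; subst h; exact hS hx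
        · exact ⟨Or.inr h, h2⟩
    have h2 : (t+1) ∉ Icc 1 t \ S := by simp
    rw [h1, Finset.prod_insert h2]; ring
  · apply Finset.sum_congr rfl
    intro S hS
    simp only [Finset.mem_powerset] at hS
    have htS : (t+1) ∉ S := fun h => hnot (hS h)
    have h1 : insert (t+1) (Icc 1 t) \ insert (t+1) S = Icc 1 t \ S := by
      ext x
      simp only [Finset.mem_sdiff, Finset.mem_insert, not_or]
      constructor
      · rintro ⟨h|h, h2, h3⟩
        · exact absurd h h2
        · exact ⟨h, h3⟩
      · rintro ⟨h, h2⟩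
        exact ⟨Or.inr h, fun hx => hnot (hx ▸ h), h2⟩
    rw [h1, Finset.prod_insert htS, Finset.card_insert_of_notMem htS]; ring

lemma sum_w_one (p : ℕ → ℝ) (t : ℕ) :
    ∑ S ∈ (Icc 1 t).powerset, (∏ i ∈ S, p i) * ∏ i ∈ Icc 1 t \ S, (1 - p i) = 1 := by
  rw [← Finset.prod_add]; simp

lemma probLt_eq_if (p : ℕ → ℝ) (t k : ℕ) :
    probLt p t k = ∑ S ∈ (Icc 1 t).powerset,
      (∏ i ∈ S, p i) * (∏ i ∈ Icc 1 t \ S, (1 - p i)) * (if S.card < k then 1 else 0) := by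
  rw [probLt, Finset.sum_filter]
  apply Finset.sum_congr rfl; intro S _
  by_cases h : S.card < k <;> simp [h]

lemma probLt_zero (p : ℕ → ℝ) (k : ℕ) : probLt p 0 k = if 1 ≤ k then 1 else 0 := by
  cases k with
  | zero => simp [probLt]
  | succ k => simp [probLt, Finset.filter_singleton]

lemma eMinBer_zero (p : ℕ → ℝ) (k : ℕ) : eMinBer p 0 k = 0 := by
  simp [eMinBer]

lemma eMinBer_k_zero (p : ℕ → ℝ) (t : ℕ) : eMinBer p t 0 = 0 := by
  simp [eMinBer]

lemma probLt_k_zero (p : ℕ → ℝ) (t : ℕ) : probLt p t 0 = 0 := by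
  simp [probLt]

lemma probLt_succ (p : ℕ → ℝ) (t k : ℕ) :
    probLt p (t+1) k = (1 - p (t+1)) * probLt p t k + p (t+1) * probLt p t (k-1) := by
  rw [probLt_eq_if, probLt_eq_if, probLt_eq_if,
    sum_pw_succ p t (fun c => if c < k then 1 else 0)]
  congr 2
  apply Finset.sum_congr rfl; intro S _
  congr 1
  have h : S.card + 1 < k ↔ S.card < k - 1 := by omega
  simp only [h]

lemma eMinBer_succ (p : ℕ → ℝ) (t k : ℕ) (hk : 1 ≤ k) :
    eMinBer p (t+1) k = (1 - p (t+1)) * eMinBer p t k + p (t+1) * (1 + eMinBer p t (k-1)) := by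
  have key : ∀ c : ℕ, min (((c + 1 : ℕ)):ℝ) (k:ℝ) = 1 + min (c:ℝ) (((k-1 : ℕ)):ℝ) := by
    intro c
    rcases le_or_gt (c+1) k with h | h
    · rw [min_eq_left (by exact_mod_cast h), min_eq_left (by
        exact_mod_cast (by omega : c ≤ k - 1))]
      push_cast; ring
    · rw [min_eq_right (by exact_mod_cast Nat.le_of_lt h), min_eq_right (by
        exact_mod_cast (by omega : k - 1 ≤ c))]
      have h2 : k = 1 + (k-1) := by omega
      have h3 : (k:ℝ) = 1 + ((k-1:ℕ):ℝ) := by exact_mod_cast h2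
      linarith
  have h2 : (∑ S ∈ (Icc 1 t).powerset, (∏ i ∈ S, p i) * (∏ i ∈ Icc 1 t \ S, (1 - p i)) * min (((S.card + 1 : ℕ)):ℝ) (k:ℝ)) = 1 + eMinBer p t (k-1) := by
    have hcg : ∀ S ∈ (Icc 1 t).powerset,
        (∏ i ∈ S, p i) * (∏ i ∈ Icc 1 t \ S, (1 - p i)) * min (((S.card + 1 : ℕ)):ℝ) (k:ℝ)
        = (∏ i ∈ S, p i) * (∏ i ∈ Icc 1 t \ S, (1 - p i))
          + (∏ i ∈ S, p i) * (∏ i ∈ Icc 1 t \ S, (1 - p i)) * min ((S.card):ℝ) (((k-1:ℕ)):ℝ) := by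
      intro S _; rw [key]; ring
    rw [Finset.sum_congr rfl hcg, Finset.sum_add_distrib, sum_w_one, eMinBer]
  rw [eMinBer, sum_pw_succ p t (fun c => min (c:ℝ) (k:ℝ)), ← h2]
  rfl


lemma w_nonneg {p : ℕ → ℝ} {t : ℕ} (hp : ∀ i ∈ Icc 1 t, 0 ≤ p i ∧ p i ≤ 1)
    {S : Finset ℕ} (hS : S ∈ (Icc 1 t).powerset) :
    0 ≤ (∏ i ∈ S, p i) * ∏ i ∈ Icc 1 t \ S, (1 - p i) := by
  simp only [Finset.mem_powerset] at hS
  apply mul_nonneg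
  · exact Finset.prod_nonneg fun i hi => (hp i (hS hi)).1
  · exact Finset.prod_nonneg fun i hi => by
      have := (hp i (Finset.mem_sdiff.mp hi).1).2; linarith

lemma probLt_nonneg {p : ℕ → ℝ} {t k : ℕ} (hp : ∀ i ∈ Icc 1 t, 0 ≤ p i ∧ p i ≤ 1) :
    0 ≤ probLt p t k := by
  apply Finset.sum_nonneg
  intro S hS
  exact w_nonneg hp (Finset.mem_of_mem_filter S hS)

lemma probLt_le_one {p : ℕ → ℝ} {t k : ℕ} (hp : ∀ i ∈ Icc 1 t, 0 ≤ p i ∧ p i ≤ 1) :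
    probLt p t k ≤ 1 := by
  rw [← sum_w_one p t]
  exact Finset.sum_le_sum_of_subset_of_nonneg (Finset.filter_subset _ _)
    (fun S hS _ => w_nonneg hp hS)

lemma probLt_mono_k {p : ℕ → ℝ} {t k k' : ℕ} (hp : ∀ i ∈ Icc 1 t, 0 ≤ p i ∧ p i ≤ 1)
    (hkk : k ≤ k') : probLt p t k ≤ probLt p t k' := by
  apply Finset.sum_le_sum_of_subset_of_nonneg
  · apply Finset.monotone_filter_right
    intro S _ hS; exact lt_of_lt_of_le hS hkk
  · intro S hS _; exact w_nonneg hp (Finset.mem_of_mem_filter S hS)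

lemma eMinBer_nonneg {p : ℕ → ℝ} {t k : ℕ} (hp : ∀ i ∈ Icc 1 t, 0 ≤ p i ∧ p i ≤ 1) :
    0 ≤ eMinBer p t k := by
  apply Finset.sum_nonneg
  intro S hS
  exact mul_nonneg (w_nonneg hp hS) (le_min (by positivity) (by positivity))

lemma eMinBer_le_k {p : ℕ → ℝ} {t k : ℕ} (hp : ∀ i ∈ Icc 1 t, 0 ≤ p i ∧ p i ≤ 1) :
    eMinBer p t k ≤ k := by
  calc eMinBer p t k ≤ ∑ S ∈ (Icc 1 t).powerset,
        ((∏ i ∈ S, p i) * ∏ i ∈ Icc 1 t \ S, (1 - p i)) * k := by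
        apply Finset.sum_le_sum
        intro S hS
        exact mul_le_mul_of_nonneg_left (min_le_right _ _) (w_nonneg hp hS)
    _ = k := by rw [← Finset.sum_mul, sum_w_one, one_mul]

lemma probLt_congr {p q : ℕ → ℝ} {t k : ℕ} (h : ∀ i ∈ Icc 1 t, p i = q i) :
    probLt p t k = probLt q t k := by
  apply Finset.sum_congr rfl
  intro S hS
  have hS' := Finset.mem_powerset.mp (Finset.mem_of_mem_filter S hS)
  congr 1
  · exact Finset.prod_congr rfl fun i hi => h i (hS' hi)
  · exact Finset.prod_congr rfl fun i hi => by rw [h i (Finset.mem_sdiff.mp hi).1]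

lemma eMinBer_congr {p q : ℕ → ℝ} {t k : ℕ} (h : ∀ i ∈ Icc 1 t, p i = q i) :
    eMinBer p t k = eMinBer q t k := by
  apply Finset.sum_congr rfl
  intro S hS
  have hS' := Finset.mem_powerset.mp hS
  congr 2
  · exact Finset.prod_congr rfl fun i hi => h i (hS' hi)
  · exact Finset.prod_congr rfl fun i hi => by rw [h i (Finset.mem_sdiff.mp hi).1]

lemma probLt_eq_eM (p : ℕ → ℝ) : ∀ t k, 1 ≤ k →
    probLt p t k = 1 + eMinBer p t (k-1) - eMinBer p t k := by
  intro t
  induction t with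
  | zero =>
    intro k hk
    rw [probLt_zero, eMinBer_zero, eMinBer_zero]
    simp [hk]
  | succ t ih =>
    intro k hk
    match k, hk with
    | 1, _ =>
      rw [probLt_succ, probLt_k_zero, eMinBer_succ p t 1 le_rfl, ih 1 le_rfl]
      simp only [show (1:ℕ)-1 = 0 from rfl, eMinBer_k_zero]
      ring
    | (k+2), _ =>
      rw [probLt_succ, eMinBer_succ p t (k+2) (by omega)]
      simp only [show k+2-1 = k+1 from rfl]
      rw [eMinBer_succ p t (k+1) (by omega)]
      simp only [show k+1-1 = k from rfl]
      rw [ih (k+2) (by omega), ih (k+1) (by omega)]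
      simp only [show k+2-1 = k+1 from rfl, show k+1-1 = k from rfl]
      ring

lemma eMinBer_mono_k {p : ℕ → ℝ} {t k k' : ℕ} (hp : ∀ i ∈ Icc 1 t, 0 ≤ p i ∧ p i ≤ 1)
    (hkk : k ≤ k') : eMinBer p t k ≤ eMinBer p t k' := by
  apply Finset.sum_le_sum
  intro S hS
  apply mul_le_mul_of_nonneg_left _ (w_nonneg hp hS)
  exact min_le_min le_rfl (by exact_mod_cast hkk)

lemma eMinBer_mono_p {p q : ℕ → ℝ} : ∀ {t : ℕ},
    (∀ i ∈ Icc 1 t, 0 ≤ p i) → (∀ i ∈ Icc 1 t, q i ≤ 1) → (∀ i ∈ Icc 1 t, p i ≤ q i) →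
    ∀ k, eMinBer p t k ≤ eMinBer q t k := by
  intro t
  induction t with
  | zero => intro _ _ _ k; rw [eMinBer_zero, eMinBer_zero]
  | succ t ih =>
    intro hp0 hq1 hpq k
    have hmem : (t+1) ∈ Icc 1 (t+1) := by simp
    have hsub : ∀ i ∈ Icc 1 t, i ∈ Icc 1 (t+1) := by
      intro i hi; simp only [Finset.mem_Icc] at *; omega
    have hp0' := fun i hi => hp0 i (hsub i hi)
    have hq1' := fun i hi => hq1 i (hsub i hi)
    have hpq' := fun i hi => hpq i (hsub i hi)
    have hq' : ∀ i ∈ Icc 1 t, 0 ≤ q i ∧ q i ≤ 1 :=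
      fun i hi => ⟨le_trans (hp0' i hi) (hpq' i hi), hq1' i hi⟩
    rcases Nat.eq_zero_or_pos k with hk | hk
    · subst hk; rw [eMinBer_k_zero, eMinBer_k_zero]
    rw [eMinBer_succ p t k hk, eMinBer_succ q t k hk]
    have ha0 : 0 ≤ p (t+1) := hp0 _ hmem
    have hb1 : q (t+1) ≤ 1 := hq1 _ hmem
    have hab : p (t+1) ≤ q (t+1) := hpq _ hmem
    have ha1 : p (t+1) ≤ 1 := le_trans hab hb1
    have h1 : eMinBer p t k ≤ eMinBer q t k := ih hp0' hq1' hpq' k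
    have h2 : eMinBer p t (k-1) ≤ eMinBer q t (k-1) := ih hp0' hq1' hpq' (k-1)
    have hPL : (0:ℝ) ≤ 1 + eMinBer q t (k-1) - eMinBer q t k := by
      rw [← probLt_eq_eM q t k hk]
      exact probLt_nonneg hq'
    nlinarith [mul_le_mul_of_nonneg_left h1 (by linarith : (0:ℝ) ≤ 1 - p (t+1)),
      mul_le_mul_of_nonneg_left h2 ha0]

lemma probLt_anti_p {p q : ℕ → ℝ} : ∀ {t : ℕ},
    (∀ i ∈ Icc 1 t, 0 ≤ p i) → (∀ i ∈ Icc 1 t, q i ≤ 1) → (∀ i ∈ Icc 1 t, p i ≤ q i) →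
    ∀ k, probLt q t k ≤ probLt p t k := by
  intro t
  induction t with
  | zero => intro _ _ _ k; rw [probLt_zero, probLt_zero]
  | succ t ih =>
    intro hp0 hq1 hpq k
    have hmem : (t+1) ∈ Icc 1 (t+1) := by simp
    have hsub : ∀ i ∈ Icc 1 t, i ∈ Icc 1 (t+1) := by
      intro i hi; simp only [Finset.mem_Icc] at *; omega
    have hp0' := fun i hi => hp0 i (hsub i hi)
    have hq1' := fun i hi => hq1 i (hsub i hi)
    have hpq' := fun i hi => hpq i (hsub i hi)
    have hp' : ∀ i ∈ Icc 1 t, 0 ≤ p i ∧ p i ≤ 1 :=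
      fun i hi => ⟨hp0' i hi, le_trans (hpq' i hi) (hq1' i hi)⟩
    rw [probLt_succ, probLt_succ]
    have ha0 : 0 ≤ p (t+1) := hp0 _ hmem
    have hb1 : q (t+1) ≤ 1 := hq1 _ hmem
    have hab : p (t+1) ≤ q (t+1) := hpq _ hmem
    have hb0 : 0 ≤ q (t+1) := le_trans ha0 hab
    have h1 : probLt q t k ≤ probLt p t k := ih hp0' hq1' hpq' k
    have h2 : probLt q t (k-1) ≤ probLt p t (k-1) := ih hp0' hq1' hpq' (k-1)
    have hmk : probLt p t (k-1) ≤ probLt p t k := probLt_mono_k hp' (by omega)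
    nlinarith [mul_le_mul_of_nonneg_left h1 (by linarith : (0:ℝ) ≤ 1 - q (t+1)),
      mul_le_mul_of_nonneg_left h2 hb0]

lemma eMinBer_succ_le {p : ℕ → ℝ} {t k : ℕ} (hp : ∀ i ∈ Icc 1 (t+1), 0 ≤ p i ∧ p i ≤ 1) :
    eMinBer p (t+1) k ≤ eMinBer p t k + p (t+1) := by
  have hmem : (t+1) ∈ Icc 1 (t+1) := by simp
  have hp' : ∀ i ∈ Icc 1 t, 0 ≤ p i ∧ p i ≤ 1 := by
    intro i hi; apply hp; simp only [Finset.mem_Icc] at *; omega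
  rcases Nat.eq_zero_or_pos k with hk | hk
  · subst hk; rw [eMinBer_k_zero, eMinBer_k_zero]; linarith [(hp _ hmem).1]
  rw [eMinBer_succ p t k hk]
  have h1 : (0:ℝ) ≤ 1 + eMinBer p t (k-1) - eMinBer p t k := by
    rw [← probLt_eq_eM p t k hk]; exact probLt_nonneg hp'
  have h2 : 1 + eMinBer p t (k-1) - eMinBer p t k ≤ 1 := by
    have := probLt_le_one (k := k) hp'
    rw [probLt_eq_eM p t k hk] at this; linarith
  nlinarith [(hp _ hmem).1]

lemma eMinBer_le_succ {p : ℕ → ℝ} {t k : ℕ} (hp : ∀ i ∈ Icc 1 (t+1), 0 ≤ p i ∧ p i ≤ 1) :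
    eMinBer p t k ≤ eMinBer p (t+1) k := by
  have hmem : (t+1) ∈ Icc 1 (t+1) := by simp
  have hp' : ∀ i ∈ Icc 1 t, 0 ≤ p i ∧ p i ≤ 1 := by
    intro i hi; apply hp; simp only [Finset.mem_Icc] at *; omega
  rcases Nat.eq_zero_or_pos k with hk | hk
  · subst hk; rw [eMinBer_k_zero, eMinBer_k_zero]
  rw [eMinBer_succ p t k hk]
  have h1 : (0:ℝ) ≤ 1 + eMinBer p t (k-1) - eMinBer p t k := by
    rw [← probLt_eq_eM p t k hk]; exact probLt_nonneg hp'
  nlinarith [(hp _ hmem).1]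

lemma eMinBer_eq_sum (p : ℕ → ℝ) : ∀ t k,
    eMinBer p t k = ∑ i ∈ Icc 1 t, p i * probLt p (i-1) k := by
  intro t
  induction t with
  | zero => intro k; rw [eMinBer_zero]; simp
  | succ t ih =>
    intro k
    rw [Finset.sum_Icc_succ_top (by omega : 1 ≤ t+1), ← ih k]
    simp only [Nat.add_sub_cancel]
    rcases Nat.eq_zero_or_pos k with hk | hk
    · subst hk; rw [eMinBer_k_zero, eMinBer_k_zero, probLt_k_zero]; ring
    rw [eMinBer_succ p t k hk, probLt_eq_eM p t k hk]
    ring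

lemma probLt_of_zero {p : ℕ → ℝ} : ∀ {t k : ℕ}, (∀ i ∈ Icc 1 t, p i = 0) → 1 ≤ k →
    probLt p t k = 1 := by
  intro t
  induction t with
  | zero => intro k _ hk; rw [probLt_zero]; simp [hk]
  | succ t ih =>
    intro k h hk
    have hmem : (t+1) ∈ Icc 1 (t+1) := by simp
    have h' : ∀ i ∈ Icc 1 t, p i = 0 := by
      intro i hi; apply h; simp only [Finset.mem_Icc] at *; omega
    rw [probLt_succ, h _ hmem, ih h' hk]; ring

lemma eMinBer_of_zero {p : ℕ → ℝ} {t k : ℕ} (h : ∀ i ∈ Icc 1 t, p i = 0) :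
    eMinBer p t k = 0 := by
  rw [eMinBer_eq_sum]
  apply Finset.sum_eq_zero
  intro i hi; rw [h i hi]; ring

lemma probLt_of_one {p : ℕ → ℝ} : ∀ {t : ℕ}, (∀ i ∈ Icc 1 t, p i = 1) →
    ∀ k, probLt p t k = if t < k then 1 else 0 := by
  intro t
  induction t with
  | zero =>
    intro _ k
    rw [probLt_zero]
    have : 1 ≤ k ↔ 0 < k := by omega
    simp only [this]
  | succ t ih =>
    intro h k
    have hmem : (t+1) ∈ Icc 1 (t+1) := by simp
    have h' : ∀ i ∈ Icc 1 t, p i = 1 := by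
      intro i hi; apply h; simp only [Finset.mem_Icc] at *; omega
    rw [probLt_succ, h _ hmem, ih h' k, ih h' (k-1)]
    have : t < k - 1 ↔ t + 1 < k := by omega
    simp only [this]
    ring

lemma eMinBer_of_one {p : ℕ → ℝ} {t k : ℕ} (h : ∀ i ∈ Icc 1 t, p i = 1) :
    eMinBer p t k = min t k := by
  rw [eMinBer_eq_sum]
  have : ∀ i ∈ Icc 1 t, p i * probLt p (i-1) k = if i - 1 < k then 1 else 0 := by
    intro i hi
    have hi' : ∀ j ∈ Icc 1 (i-1), p j = 1 := by
      intro j hj; apply h; simp only [Finset.mem_Icc] at *; omega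
    rw [h i hi, probLt_of_one hi' k, one_mul]
  rw [Finset.sum_congr rfl this, ← Finset.sum_filter]
  simp only [Finset.sum_const, nsmul_eq_mul, mul_one]
  have hf : Finset.filter (fun i => i - 1 < k) (Icc 1 t) = Icc 1 (min t k) := by
    ext i; simp only [Finset.mem_filter, Finset.mem_Icc]; omega
  rw [hf, Nat.card_Icc]
  have : min t k + 1 - 1 = min t k := by omega
  rw [this, Nat.cast_min]


noncomputable def cx (k : ℕ) (τ : ℕ → ℝ) : ℕ → ℕ → ℝ
  | 0, l => if l = k then 1 else 0
  | (t+1), l => (1 - τ (t+1)) * cx k τ t l + (if l < k then τ (t+1) * cx k τ t (l+1) else 0)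

lemma cx_zero (k : ℕ) (τ : ℕ → ℝ) (l : ℕ) : cx k τ 0 l = if l = k then 1 else 0 := rfl

lemma cx_succ (k : ℕ) (τ : ℕ → ℝ) (t l : ℕ) :
    cx k τ (t+1) l = (1 - τ (t+1)) * cx k τ t l
      + (if l < k then τ (t+1) * cx k τ t (l+1) else 0) := rfl

lemma cx_nonneg {k : ℕ} {τ : ℕ → ℝ} : ∀ {t : ℕ},
    (∀ i ∈ Icc 1 t, 0 ≤ τ i ∧ τ i ≤ 1) → ∀ l, 0 ≤ cx k τ t l := by
  intro t
  induction t with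
  | zero => intro _ l; rw [cx_zero]; split <;> norm_num
  | succ t ih =>
    intro hτ l
    have hmem : (t+1) ∈ Icc 1 (t+1) := by simp
    have hτ' : ∀ i ∈ Icc 1 t, 0 ≤ τ i ∧ τ i ≤ 1 := by
      intro i hi; apply hτ; simp only [Finset.mem_Icc] at *; omega
    rw [cx_succ]
    have h1 := (hτ _ hmem).1
    have h2 := (hτ _ hmem).2
    have := ih hτ' l
    have := ih hτ' (l+1)
    have : (0:ℝ) ≤ (1 - τ (t+1)) * cx k τ t l := by
      apply mul_nonneg (by linarith) (ih hτ' l)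
    split
    · have : (0:ℝ) ≤ τ (t+1) * cx k τ t (l+1) := mul_nonneg h1 (ih hτ' (l+1))
      linarith
    · linarith

lemma cx_eq {k : ℕ} {τ : ℕ → ℝ} (hk : 1 ≤ k) : ∀ t, ∀ l ∈ Icc 1 k,
    cx k τ t l = probLt τ t (k-l+1) - probLt τ t (k-l) := by
  intro t
  induction t with
  | zero =>
    intro l hl
    simp only [Finset.mem_Icc] at hl
    rw [cx_zero, probLt_zero, probLt_zero]
    have h1 : 1 ≤ k - l + 1 := by omega
    rcases eq_or_lt_of_le hl.2 with h | h
    · subst h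
      simp only [Nat.sub_self]
      norm_num
    · have h2 : 1 ≤ k - l := by omega
      simp only [if_pos h1, if_pos h2, if_neg (by omega : ¬ l = k)]
      ring
  | succ t ih =>
    intro l hl
    simp only [Finset.mem_Icc] at hl
    rw [cx_succ, probLt_succ, probLt_succ]
    have e1 : k - l + 1 - 1 = k - l := by omega
    rw [e1]
    rcases eq_or_lt_of_le hl.2 with h | h
    · subst h
      simp only [Nat.sub_self, probLt_k_zero, if_neg (lt_irrefl l)]
      rw [ih l (by simp only [Finset.mem_Icc]; omega)]
      simp only [Nat.sub_self, Nat.zero_sub, probLt_k_zero]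
      ring
    · rw [if_pos h, ih l (by simp only [Finset.mem_Icc]; omega),
        ih (l+1) (by simp only [Finset.mem_Icc]; omega)]
      have e2 : k - (l+1) + 1 = k - l := by omega
      have e3 : k - (l+1) = k - l - 1 := by omega
      rw [e2, e3]
      ring

lemma sum_cx_eq {k : ℕ} {τ : ℕ → ℝ} (hk : 1 ≤ k) (t : ℕ) :
    ∑ l ∈ Icc 1 k, cx k τ t l = probLt τ t k := by
  have h1 : ∑ l ∈ Icc 1 k, cx k τ t l
      = ∑ j ∈ Icc 1 k, (probLt τ t j - probLt τ t (j-1)) := by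
    apply Finset.sum_nbij' (fun l => k + 1 - l) (fun j => k + 1 - j)
    · intro a ha; simp only [Finset.mem_Icc] at *; omega
    · intro a ha; simp only [Finset.mem_Icc] at *; omega
    · intro a ha; simp only [Finset.mem_Icc] at ha; omega
    · intro a ha; simp only [Finset.mem_Icc] at ha; omega
    · intro a ha
      rw [cx_eq hk t a ha]
      simp only [Finset.mem_Icc] at ha
      have e1 : k + 1 - a = k - a + 1 := by omega
      have e2 : k - a + 1 - 1 = k - a := by omega
      rw [e1, e2]
  rw [h1]
  have h2 : ∑ j ∈ Icc 1 k, (probLt τ t j - probLt τ t (j-1))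
      = ∑ i ∈ Finset.range k, (probLt τ t (i+1) - probLt τ t i) := by
    apply Finset.sum_nbij' (fun j => j - 1) (fun i => i + 1)
    · intro a ha; simp only [Finset.mem_Icc, Finset.mem_range] at *; omega
    · intro a ha; simp only [Finset.mem_Icc, Finset.mem_range] at *; omega
    · intro a ha; simp only [Finset.mem_Icc] at ha; omega
    · intro a ha; simp only [Finset.mem_range] at ha; omega
    · intro a ha
      simp only [Finset.mem_Icc] at ha
      have e1 : a - 1 + 1 = a := by omega
      rw [e1]
  rw [h2, Finset.sum_range_sub (fun i => probLt τ t i), probLt_k_zero, sub_zero]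

lemma probLt_anti_t {τ : ℕ → ℝ} {k : ℕ} : ∀ {t t' : ℕ}, t ≤ t' →
    (∀ i ∈ Icc 1 t', 0 ≤ τ i ∧ τ i ≤ 1) →
    probLt τ t' k ≤ probLt τ t k := by
  intro t t' htt
  induction t' with
  | zero =>
    intro _
    have ht0 : t = 0 := by omega
    subst ht0; exact le_rfl
  | succ t' ih =>
    intro hτ
    have hτ' : ∀ i ∈ Icc 1 t', 0 ≤ τ i ∧ τ i ≤ 1 := by
      intro i hi; apply hτ; simp only [Finset.mem_Icc] at *; omega
    rcases Nat.lt_or_ge t (t'+1) with h | h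
    · have step : probLt τ (t'+1) k ≤ probLt τ t' k := by
        rw [probLt_succ]
        have hq := hτ (t'+1) (by simp)
        have hmk : probLt τ t' (k-1) ≤ probLt τ t' k := probLt_mono_k hτ' (by omega)
        nlinarith [hq.1, hq.2]
      exact le_trans step (ih (by omega) hτ')
    · have he : t = t' + 1 := by omega
      subst he; exact le_rfl


lemma G_mono {n m : ℕ} {G : ℕ → ℕ → ℝ} (hG : IsTypeDist n m G) {i : ℕ} (hi : i ∈ Icc 1 n) :
    ∀ j j', j ≤ j' → j' ≤ m → G i j ≤ G i j' := by
  intro j j' hjj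
  induction j' with
  | zero => intro _; have : j = 0 := by omega
            subst this; exact le_rfl
  | succ j' ih =>
    intro hm
    rcases Nat.lt_or_ge j (j'+1) with h | h
    · refine le_trans (ih (by omega) (by omega)) ?_
      have := (hG i hi).2.2 (j'+1) (by simp only [Finset.mem_Icc]; omega)
      simpa using this
    · have : j = j' + 1 := by omega
      subst this; exact le_rfl

lemma G_bounds {n m : ℕ} {G : ℕ → ℕ → ℝ} (hG : IsTypeDist n m G) {i : ℕ} (hi : i ∈ Icc 1 n)
    {j : ℕ} (hj : j ≤ m) : 0 ≤ G i j ∧ G i j ≤ 1 := by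
  constructor
  · have := G_mono hG hi 0 j (by omega) hj
    rw [(hG i hi).1] at this; exact this
  · have := G_mono hG hi j m hj le_rfl
    rw [(hG i hi).2.1] at this; exact this

lemma tau_bounds {n m : ℕ} {G : ℕ → ℕ → ℝ} (hG : IsTypeDist n m G) {J : ℕ}
    (hJ : J ∈ Icc 1 m) {ρ : ℝ} (hρ0 : 0 ≤ ρ) (hρ1 : ρ ≤ 1) {i : ℕ} (hi : i ∈ Icc 1 n) :
    G i (J-1) ≤ tauOf G J ρ i ∧ tauOf G J ρ i ≤ G i J := by
  simp only [Finset.mem_Icc] at hJ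
  have hmono : G i (J-1) ≤ G i J := G_mono hG hi (J-1) J (by omega) hJ.2
  unfold tauOf
  constructor <;> nlinarith

lemma tau_mem {n m : ℕ} {G : ℕ → ℕ → ℝ} (hG : IsTypeDist n m G) {J : ℕ}
    (hJ : J ∈ Icc 1 m) {ρ : ℝ} (hρ0 : 0 ≤ ρ) (hρ1 : ρ ≤ 1) :
    ∀ i ∈ Icc 1 n, 0 ≤ tauOf G J ρ i ∧ tauOf G J ρ i ≤ 1 := by
  intro i hi
  have h := tau_bounds hG hJ hρ0 hρ1 hi
  simp only [Finset.mem_Icc] at hJ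
  have h1 := (G_bounds hG hi (by omega : J - 1 ≤ m)).1
  have h2 := (G_bounds hG hi hJ.2).2
  exact ⟨le_trans h1 h.1, le_trans h.2 h2⟩

noncomputable def xC (k : ℕ) (τ : ℕ → ℝ) : ℕ → ℕ → ℝ := fun i l => cx k τ (i-1) l
noncomputable def yC (k : ℕ) (τ : ℕ → ℝ) : ℕ → ℕ → ℝ := fun i l => τ i * cx k τ (i-1) l

lemma memP_canon {k n : ℕ} {τ : ℕ → ℝ} (hk : 1 ≤ k)
    (hτ : ∀ i ∈ Icc 1 n, 0 ≤ τ i ∧ τ i ≤ 1) : memP k n (xC k τ) (yC k τ) := by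
  refine ⟨?_, ?_, ?_, ?_⟩
  · simp [xC, cx_zero]
  · intro l _ hl
    simp [xC, cx_zero]
    omega
  · intro i hi l hl
    simp only [Finset.mem_Icc] at hi hl
    unfold xC yC
    have e1 : i - 1 = (i - 2) + 1 := by omega
    rw [e1, cx_succ]
    simp only [Nat.add_sub_cancel]
    split <;> ring
  · intro i hi l hl
    simp only [Finset.mem_Icc] at hi
    have hτi := hτ i (by simp only [Finset.mem_Icc]; omega)
    have hτ' : ∀ j ∈ Icc 1 (i-1), 0 ≤ τ j ∧ τ j ≤ 1 := by
      intro j hj; apply hτ; simp only [Finset.mem_Icc] at *; omega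
    have hcx : 0 ≤ cx k τ (i-1) l := cx_nonneg hτ' l
    constructor
    · exact mul_nonneg hτi.1 hcx
    · unfold xC yC
      nlinarith [hτi.2]

lemma x_unique {k n : ℕ} {τ : ℕ → ℝ} {x y : ℕ → ℕ → ℝ} (hk : 1 ≤ k)
    (hP : memP k n x y)
    (hy : ∀ i ∈ Icc 1 n, ∀ l ∈ Icc 1 k, y i l = τ i * x i l) :
    ∀ i ∈ Icc 1 n, ∀ l ∈ Icc 1 k, x i l = cx k τ (i-1) l := by
  intro i hi
  simp only [Finset.mem_Icc] at hi
  obtain ⟨hi1, hi2⟩ := hi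
  induction i, hi1 using Nat.le_induction with
  | base =>
    intro l hl
    simp only [Finset.mem_Icc] at hl
    rw [show (1:ℕ) - 1 = 0 from rfl, cx_zero]
    rcases eq_or_lt_of_le hl.2 with h | h
    · rw [if_pos h, h, hP.1]
    · rw [if_neg (by omega)]
      exact hP.2.1 l hl.1 h
  | succ i hi1 ih =>
    intro l hl
    have hrec := hP.2.2.1 (i+1) (by simp only [Finset.mem_Icc]; omega) l hl
    simp only [Nat.add_sub_cancel] at hrec ⊢
    have hiI : i ∈ Icc 1 n := by simp only [Finset.mem_Icc]; omega
    have hyl := hy i hiI l hl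
    rw [show i = (i-1)+1 by omega, cx_succ, show i - 1 + 1 = i by omega]
    rw [hrec, hyl, ih (by omega) l hl]
    simp only [Finset.mem_Icc] at hl
    by_cases hlk : l < k
    · rw [if_pos hlk, if_pos hlk,
        hy i hiI (l+1) (by simp only [Finset.mem_Icc]; omega),
        ih (by omega) (l+1) (by simp only [Finset.mem_Icc]; omega)]
      ring
    · rw [if_neg hlk, if_neg hlk]
      ring

lemma coverSum_eval {k n : ℕ} {G : ℕ → ℕ → ℝ} {τ : ℕ → ℝ} {x y : ℕ → ℕ → ℝ} (hk : 1 ≤ k)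
    (hτ : ∀ i ∈ Icc 1 n, 0 ≤ τ i ∧ τ i ≤ 1)
    (hP : memP k n x y)
    (hy : ∀ i ∈ Icc 1 n, ∀ l ∈ Icc 1 k, y i l = τ i * x i l) (j : ℕ) :
    coverSum k n G j x y = ∑ i ∈ Icc 1 n, min (τ i) (G i j) * probLt τ (i-1) k := by
  unfold coverSum
  apply Finset.sum_congr rfl
  intro i hi
  have hτ' : ∀ a ∈ Icc 1 (i-1), 0 ≤ τ a ∧ τ a ≤ 1 := by
    intro a ha; apply hτ; simp only [Finset.mem_Icc] at *; omega
  have hstep : ∀ l ∈ Icc 1 k, min (y i l) (G i j * x i l)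
      = min (τ i) (G i j) * cx k τ (i-1) l := by
    intro l hl
    rw [hy i hi l hl, x_unique hk hP hy i hi l hl,
      min_mul_of_nonneg _ _ (cx_nonneg hτ' l)]
  rw [Finset.sum_congr rfl hstep, ← Finset.mul_sum, sum_cx_eq hk (i-1)]

lemma innerLP_le {k n m : ℕ} {G : ℕ → ℕ → ℝ} {J : ℕ} {ρ : ℝ} {Q : ℕ → ℝ} (hk : 1 ≤ k)
    (hτ : ∀ i ∈ Icc 1 n, 0 ≤ tauOf G J ρ i ∧ tauOf G J ρ i ≤ 1)
    {j₀ : ℕ} (hj₀ : j₀ ∈ Icc 1 m) (hQ : 0 < Q j₀) {b : ℝ} (hb : 0 ≤ b)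
    (hcb : ∑ i ∈ Icc 1 n, min (tauOf G J ρ i) (G i j₀) * probLt (tauOf G J ρ) (i-1) k
      ≤ b * Q j₀) :
    innerLP_OST k n m G J ρ Q ≤ b := by
  apply Real.sSup_le _ hb
  rintro θ ⟨x, y, hP, hy, hcons⟩
  have h := hcons j₀ hj₀
  rw [coverSum_eval hk hτ hP hy j₀] at h
  have := le_trans h hcb
  exact le_of_mul_le_mul_right this hQ

lemma innerLP_ge {k n m : ℕ} {G : ℕ → ℕ → ℝ} {J : ℕ} {ρ : ℝ} {Q : ℕ → ℝ} (hk : 1 ≤ k)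
    (hτ : ∀ i ∈ Icc 1 n, 0 ≤ tauOf G J ρ i ∧ tauOf G J ρ i ≤ 1)
    (hbdd : ∃ j₀ ∈ Icc 1 m, 0 < Q j₀)
    {θ₀ : ℝ}
    (hθ : ∀ j ∈ Icc 1 m, θ₀ * Q j
      ≤ ∑ i ∈ Icc 1 n, min (tauOf G J ρ i) (G i j) * probLt (tauOf G J ρ) (i-1) k) :
    θ₀ ≤ innerLP_OST k n m G J ρ Q := by
  apply le_csSup
  · obtain ⟨j₀, hj₀, hQ⟩ := hbdd
    refine ⟨(∑ i ∈ Icc 1 n, min (tauOf G J ρ i) (G i j₀) * probLt (tauOf G J ρ) (i-1) k) / Q j₀, ?_⟩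
    rintro θ ⟨x, y, hP, hy, hcons⟩
    have h := hcons j₀ hj₀
    rw [coverSum_eval hk hτ hP hy j₀] at h
    rw [le_div_iff₀ hQ]
    exact h
  · refine ⟨xC k (tauOf G J ρ), yC k (tauOf G J ρ), memP_canon hk hτ, fun i _ l _ => rfl, ?_⟩
    intro j hj
    rw [coverSum_eval hk hτ (memP_canon hk hτ) (fun i _ l _ => rfl) j]
    exact hθ j hj


lemma eMinBer_le_sum {p : ℕ → ℝ} {t k : ℕ} (hp : ∀ i ∈ Icc 1 t, 0 ≤ p i ∧ p i ≤ 1) :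
    eMinBer p t k ≤ ∑ i ∈ Icc 1 t, p i := by
  rw [eMinBer_eq_sum]
  apply Finset.sum_le_sum
  intro i hi
  have hp' : ∀ a ∈ Icc 1 (i-1), 0 ≤ p a ∧ p a ≤ 1 := by
    intro a ha; apply hp; simp only [Finset.mem_Icc] at *; omega
  calc p i * probLt p (i-1) k ≤ p i * 1 :=
        mul_le_mul_of_nonneg_left (probLt_le_one hp') (hp i hi).1
    _ = p i := mul_one _

lemma G_col_mem {n m : ℕ} {G : ℕ → ℕ → ℝ} (hG : IsTypeDist n m G) {j : ℕ} (hj : j ≤ m) :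
    ∀ i ∈ Icc 1 n, 0 ≤ G i j ∧ G i j ≤ 1 := fun i hi => G_bounds hG hi hj

lemma QProph_m {k n m : ℕ} {G : ℕ → ℕ → ℝ} (hG : IsTypeDist n m G) (hkn : k ≤ n) :
    QProph k n G m = k := by
  unfold QProph
  rw [eMinBer_of_one (fun i hi => (hG i hi).2.1)]
  rw [min_eq_right (by exact_mod_cast hkn)]

lemma QExAnte_m {k n m : ℕ} {G : ℕ → ℕ → ℝ} (hG : IsTypeDist n m G) (hkn : k ≤ n) :
    QExAnte k n G m = k := by
  unfold QExAnte
  have h : ∑ i ∈ Icc 1 n, G i m = n := by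
    rw [Finset.sum_congr rfl (fun i hi => (hG i hi).2.1)]
    simp [Nat.card_Icc]
  rw [h, min_eq_right (by exact_mod_cast hkn)]

lemma QProph_facts {k n m : ℕ} {G : ℕ → ℕ → ℝ} (hG : IsTypeDist n m G) :
    ∀ j ∈ Icc 1 m, 0 ≤ QProph k n G j ∧ QProph k n G j ≤ ∑ i ∈ Icc 1 n, G i j
      ∧ QProph k n G j ≤ k := by
  intro j hj
  simp only [Finset.mem_Icc] at hj
  have hcol := G_col_mem hG hj.2
  exact ⟨eMinBer_nonneg hcol, eMinBer_le_sum hcol, eMinBer_le_k hcol⟩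

lemma QExAnte_facts {k n m : ℕ} {G : ℕ → ℕ → ℝ} (hG : IsTypeDist n m G) :
    ∀ j ∈ Icc 1 m, 0 ≤ QExAnte k n G j ∧ QExAnte k n G j ≤ ∑ i ∈ Icc 1 n, G i j
      ∧ QExAnte k n G j ≤ k := by
  intro j hj
  simp only [Finset.mem_Icc] at hj
  have hcol := G_col_mem hG hj.2
  refine ⟨le_min (Finset.sum_nonneg fun i hi => (hcol i hi).1) (by positivity),
    min_le_left _ _, min_le_right _ _⟩

lemma QProph_le_QExAnte {k n m : ℕ} {G : ℕ → ℕ → ℝ} (hG : IsTypeDist n m G) :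
    ∀ j ∈ Icc 1 m, QProph k n G j ≤ QExAnte k n G j := by
  intro j hj
  have h := QProph_facts (k := k) hG j hj
  exact le_min h.2.1 h.2.2

/-- The benchmark quantity `f(τ) = min{P(S_{n-1} < k), E[min{S_{n-1},k}]/k}`. -/
noncomputable def fVal (k n : ℕ) (τ : ℕ → ℝ) : ℝ :=
  min (probLt τ (n-1) k) (eMinBer τ (n-1) k / k)

lemma fVal_nonneg {k n : ℕ} {τ : ℕ → ℝ} (hτ : ∀ i ∈ Icc 1 (n-1), 0 ≤ τ i ∧ τ i ≤ 1) :
    0 ≤ fVal k n τ :=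
  le_min (probLt_nonneg hτ) (div_nonneg (eMinBer_nonneg hτ) (Nat.cast_nonneg k))

lemma fVal_le_one {k n : ℕ} {τ : ℕ → ℝ} (hτ : ∀ i ∈ Icc 1 (n-1), 0 ≤ τ i ∧ τ i ≤ 1) :
    fVal k n τ ≤ 1 :=
  le_trans (min_le_left _ _) (probLt_le_one hτ)

lemma keyLower {k n m : ℕ} {G : ℕ → ℕ → ℝ} (hG : IsTypeDist n m G) (hk : 1 ≤ k) (hn : 1 ≤ n)
    {J : ℕ} (hJ : J ∈ Icc 1 m) {ρ : ℝ} (hρ0 : 0 ≤ ρ) (hρ1 : ρ ≤ 1) {Q : ℕ → ℝ}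
    (hQ : ∀ j ∈ Icc 1 m, 0 ≤ Q j ∧ Q j ≤ ∑ i ∈ Icc 1 n, G i j ∧ Q j ≤ k) :
    ∀ j ∈ Icc 1 m,
      fVal k n (tauOf G J ρ) * Q j
      ≤ ∑ i ∈ Icc 1 n, min (tauOf G J ρ i) (G i j) * probLt (tauOf G J ρ) (i-1) k := by
  intro j hj
  have hτ := tau_mem hG hJ hρ0 hρ1
  have hτ' : ∀ i ∈ Icc 1 (n-1), 0 ≤ tauOf G J ρ i ∧ tauOf G J ρ i ≤ 1 := by
    intro i hi; apply hτ; simp only [Finset.mem_Icc] at *; omega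
  have hf0 : 0 ≤ fVal k n (tauOf G J ρ) := fVal_nonneg hτ'
  simp only [Finset.mem_Icc] at hj hJ
  have hQj := hQ j (by simp only [Finset.mem_Icc]; omega)
  rcases Nat.lt_or_ge j J with hjJ | hjJ
  · -- j < J : min = G i j, use probLt bound
    have hmin : ∀ i ∈ Icc 1 n, min (tauOf G J ρ i) (G i j) * probLt (tauOf G J ρ) (i-1) k
        = G i j * probLt (tauOf G J ρ) (i-1) k := by
      intro i hi
      congr 1
      apply min_eq_right
      refine le_trans (G_mono hG hi j (J-1) (by omega) (by omega)) ?_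
      exact (tau_bounds hG (by simp only [Finset.mem_Icc]; omega) hρ0 hρ1 hi).1
    rw [Finset.sum_congr rfl hmin]
    have h1 : ∀ i ∈ Icc 1 n, fVal k n (tauOf G J ρ) * G i j
        ≤ G i j * probLt (tauOf G J ρ) (i-1) k := by
      intro i hi
      have hanti : probLt (tauOf G J ρ) (n-1) k ≤ probLt (tauOf G J ρ) (i-1) k := by
        apply probLt_anti_t _ hτ'
        simp only [Finset.mem_Icc] at hi; omega
      have hfg : fVal k n (tauOf G J ρ) ≤ probLt (tauOf G J ρ) (i-1) k :=
        le_trans (min_le_left _ _) hanti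
      have hG0 : 0 ≤ G i j := (G_bounds hG hi (by omega)).1
      calc fVal k n (tauOf G J ρ) * G i j ≤ probLt (tauOf G J ρ) (i-1) k * G i j :=
            mul_le_mul_of_nonneg_right hfg hG0
        _ = G i j * probLt (tauOf G J ρ) (i-1) k := mul_comm _ _
    calc fVal k n (tauOf G J ρ) * Q j
        ≤ fVal k n (tauOf G J ρ) * ∑ i ∈ Icc 1 n, G i j :=
          mul_le_mul_of_nonneg_left hQj.2.1 hf0
      _ = ∑ i ∈ Icc 1 n, fVal k n (tauOf G J ρ) * G i j := Finset.mul_sum _ _ _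
      _ ≤ ∑ i ∈ Icc 1 n, G i j * probLt (tauOf G J ρ) (i-1) k := Finset.sum_le_sum h1
  · -- J ≤ j : min = τ i, use eMinBer bound
    have hmin : ∀ i ∈ Icc 1 n, min (tauOf G J ρ i) (G i j) * probLt (tauOf G J ρ) (i-1) k
        = tauOf G J ρ i * probLt (tauOf G J ρ) (i-1) k := by
      intro i hi
      congr 1
      apply min_eq_left
      refine le_trans (tau_bounds hG (by simp only [Finset.mem_Icc]; omega) hρ0 hρ1 hi).2 ?_
      exact G_mono hG hi J j hjJ (by omega)
    rw [Finset.sum_congr rfl hmin, ← eMinBer_eq_sum]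
    have hk0 : (0:ℝ) < k := by exact_mod_cast hk
    have step1 : fVal k n (tauOf G J ρ) * Q j ≤ fVal k n (tauOf G J ρ) * k :=
      mul_le_mul_of_nonneg_left hQj.2.2 hf0
    have step2 : fVal k n (tauOf G J ρ) * k ≤ (eMinBer (tauOf G J ρ) (n-1) k / k) * k :=
      mul_le_mul_of_nonneg_right (min_le_right _ _) (le_of_lt hk0)
    have step3 : (eMinBer (tauOf G J ρ) (n-1) k / k) * k = eMinBer (tauOf G J ρ) (n-1) k :=
      div_mul_cancel₀ _ (ne_of_gt hk0)
    have step4 : eMinBer (tauOf G J ρ) (n-1) k ≤ eMinBer (tauOf G J ρ) n k := by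
      have hrw : n = (n-1) + 1 := by omega
      rw [hrw]
      apply eMinBer_le_succ
      intro a ha
      apply hτ
      rw [hrw]
      exact ha
    linarith


lemma innerLP_both {k n m : ℕ} {G : ℕ → ℕ → ℝ} (hG : IsTypeDist n m G)
    (hk : 1 ≤ k) (hkn : k < n) (hm : 1 ≤ m)
    {J : ℕ} (hJ : J ∈ Icc 1 m) {ρ : ℝ} (hρ0 : 0 ≤ ρ) (hρ1 : ρ ≤ 1) {Q : ℕ → ℝ}
    (hQf : ∀ j ∈ Icc 1 m, 0 ≤ Q j ∧ Q j ≤ ∑ i ∈ Icc 1 n, G i j ∧ Q j ≤ k)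
    (hQm : Q m = (k:ℝ)) :
    fVal k n (tauOf G J ρ) ≤ innerLP_OST k n m G J ρ Q ∧ innerLP_OST k n m G J ρ Q ≤ 1 := by
  have hτ := tau_mem hG hJ hρ0 hρ1
  have hmm : m ∈ Icc 1 m := by simp only [Finset.mem_Icc]; omega
  have hk0 : (0:ℝ) < k := by exact_mod_cast hk
  have hbdd : ∃ j₀ ∈ Icc 1 m, 0 < Q j₀ := ⟨m, hmm, by rw [hQm]; exact hk0⟩
  have hcsum_m : ∑ i ∈ Icc 1 n, min (tauOf G J ρ i) (G i m) * probLt (tauOf G J ρ) (i-1) k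
      = eMinBer (tauOf G J ρ) n k := by
    rw [eMinBer_eq_sum]
    apply Finset.sum_congr rfl
    intro i hi
    congr 1
    apply min_eq_left
    rw [(hG i hi).2.1]
    exact (hτ i hi).2
  constructor
  · exact innerLP_ge hk hτ hbdd (keyLower hG hk (by omega) hJ hρ0 hρ1 hQf)
  · apply innerLP_le hk hτ hmm (by rw [hQm]; exact hk0) zero_le_one
    rw [hcsum_m, hQm, one_mul]
    exact eMinBer_le_k hτ

lemma W_facts {k n m : ℕ} {G : ℕ → ℕ → ℝ} (hG : IsTypeDist n m G)
    (hk : 1 ≤ k) (hkn : k < n) (hm : 1 ≤ m) {Q : ℕ → ℝ}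
    (hQf : ∀ j ∈ Icc 1 m, 0 ≤ Q j ∧ Q j ≤ ∑ i ∈ Icc 1 n, G i j ∧ Q j ≤ k)
    (hQm : Q m = (k:ℝ)) :
    BddAbove {w : ℝ | ∃ J ∈ Finset.Icc 1 m, ∃ ρ ∈ Set.Ioc (0:ℝ) 1,
        w = innerLP_OST k n m G J ρ Q}
    ∧ {w : ℝ | ∃ J ∈ Finset.Icc 1 m, ∃ ρ ∈ Set.Ioc (0:ℝ) 1,
        w = innerLP_OST k n m G J ρ Q}.Nonempty
    ∧ 0 ≤ sSup {w : ℝ | ∃ J ∈ Finset.Icc 1 m, ∃ ρ ∈ Set.Ioc (0:ℝ) 1,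
        w = innerLP_OST k n m G J ρ Q} := by
  have h1m : (1:ℕ) ∈ Icc 1 m := by simp only [Finset.mem_Icc]; omega
  have hball : ∀ w ∈ {w : ℝ | ∃ J ∈ Finset.Icc 1 m, ∃ ρ ∈ Set.Ioc (0:ℝ) 1,
      w = innerLP_OST k n m G J ρ Q}, w ≤ 1 := by
    rintro w ⟨J, hJ, ρ, hρ, rfl⟩
    exact (innerLP_both hG hk hkn hm hJ (le_of_lt hρ.1) hρ.2 hQf hQm).2
  have hbA : BddAbove {w : ℝ | ∃ J ∈ Finset.Icc 1 m, ∃ ρ ∈ Set.Ioc (0:ℝ) 1,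
      w = innerLP_OST k n m G J ρ Q} := ⟨1, hball⟩
  have hmem : innerLP_OST k n m G 1 1 Q ∈ {w : ℝ | ∃ J ∈ Finset.Icc 1 m,
      ∃ ρ ∈ Set.Ioc (0:ℝ) 1, w = innerLP_OST k n m G J ρ Q} :=
    ⟨1, h1m, 1, ⟨zero_lt_one, le_rfl⟩, rfl⟩
  refine ⟨hbA, ⟨_, hmem⟩, ?_⟩
  have hτ' : ∀ i ∈ Icc 1 (n-1), 0 ≤ tauOf G 1 1 i ∧ tauOf G 1 1 i ≤ 1 := by
    intro i hi
    apply tau_mem hG h1m zero_le_one le_rfl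
    simp only [Finset.mem_Icc] at *; omega
  calc (0:ℝ) ≤ fVal k n (tauOf G 1 1) := fVal_nonneg hτ'
    _ ≤ innerLP_OST k n m G 1 1 Q :=
        (innerLP_both hG hk hkn hm h1m zero_le_one le_rfl hQf hQm).1
    _ ≤ sSup _ := le_csSup hbA hmem

lemma innerLP_mono_Q {k n m : ℕ} {G : ℕ → ℕ → ℝ} (hG : IsTypeDist n m G)
    (hk : 1 ≤ k) (hkn : k < n) (hm : 1 ≤ m)
    {J : ℕ} (hJ : J ∈ Icc 1 m) {ρ : ℝ} (hρ0 : 0 ≤ ρ) (hρ1 : ρ ≤ 1) {Q Q' : ℕ → ℝ}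
    (hQ'f : ∀ j ∈ Icc 1 m, 0 ≤ Q' j ∧ Q' j ≤ ∑ i ∈ Icc 1 n, G i j ∧ Q' j ≤ k)
    (hQ'm : Q' m = (k:ℝ))
    (hQQ' : ∀ j ∈ Icc 1 m, Q' j ≤ Q j) :
    innerLP_OST k n m G J ρ Q ≤ innerLP_OST k n m G J ρ Q' := by
  have hτ := tau_mem hG hJ hρ0 hρ1
  have hτ' : ∀ i ∈ Icc 1 (n-1), 0 ≤ tauOf G J ρ i ∧ tauOf G J ρ i ≤ 1 := by
    intro i hi; apply hτ; simp only [Finset.mem_Icc] at *; omega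
  have hge0 : 0 ≤ innerLP_OST k n m G J ρ Q' :=
    le_trans (fVal_nonneg hτ') (innerLP_both hG hk hkn hm hJ hρ0 hρ1 hQ'f hQ'm).1
  apply Real.sSup_le _ hge0
  rintro θ ⟨x, y, hP, hy, hcons⟩
  rcases le_or_gt θ 0 with hθ | hθ
  · exact le_trans hθ hge0
  · apply le_csSup
    · have hk0 : (0:ℝ) < k := by exact_mod_cast hk
      have hmm : m ∈ Icc 1 m := by simp only [Finset.mem_Icc]; omega
      refine ⟨(∑ i ∈ Icc 1 n, min (tauOf G J ρ i) (G i m) * probLt (tauOf G J ρ) (i-1) k)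
        / Q' m, ?_⟩
      rintro θ' ⟨x', y', hP', hy', hcons'⟩
      have h := hcons' m hmm
      rw [coverSum_eval hk hτ hP' hy' m] at h
      rw [le_div_iff₀ (by rw [hQ'm]; exact hk0)]
      exact h
    · refine ⟨x, y, hP, hy, fun j hj => ?_⟩
      calc θ * Q' j ≤ θ * Q j :=
            mul_le_mul_of_nonneg_left (hQQ' j hj) (le_of_lt hθ)
        _ ≤ coverSum k n G j x y := hcons j hj


lemma cont_probLt {G : ℕ → ℕ → ℝ} {J t k : ℕ} :
    Continuous (fun ρ : ℝ => probLt (tauOf G J ρ) t k) := by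
  unfold probLt tauOf
  apply continuous_finset_sum
  intro S _
  apply Continuous.mul
  · apply continuous_finset_prod
    intro i _
    fun_prop
  · apply continuous_finset_prod
    intro i _
    fun_prop

lemma cont_eMinBer {G : ℕ → ℕ → ℝ} {J t k : ℕ} :
    Continuous (fun ρ : ℝ => eMinBer (tauOf G J ρ) t k) := by
  unfold eMinBer tauOf
  apply continuous_finset_sum
  intro S _
  apply Continuous.mul
  · apply Continuous.mul
    · apply continuous_finset_prod
      intro i _
      fun_prop
    · apply continuous_finset_prod
      intro i _
      fun_prop
  · exact continuous_const

lemma tau_glue (G : ℕ → ℕ → ℝ) (J : ℕ) : tauOf G (J+1) 0 = tauOf G J 1 := by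
  funext i
  simp [tauOf]

lemma crossing {k n m : ℕ} {G : ℕ → ℕ → ℝ} (hG : IsTypeDist n m G)
    (hk : 1 ≤ k) (hkn : k < n) (hm : 1 ≤ m) :
    ∃ J ∈ Finset.Icc 1 m, ∃ ρ ∈ Set.Ioc (0:ℝ) 1,
      probLt (tauOf G J ρ) (n-1) k = eMinBer (tauOf G J ρ) (n-1) k / k := by
  set φ : ℕ → ℝ → ℝ := fun J ρ =>
    probLt (tauOf G J ρ) (n-1) k - eMinBer (tauOf G J ρ) (n-1) k / k with hφ
  have hcont : ∀ J, Continuous (φ J) := by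
    intro J
    apply Continuous.sub cont_probLt
    exact cont_eMinBer.div_const _
  have hsub : ∀ i ∈ Icc 1 (n-1), i ∈ Icc 1 n := by
    intro i hi; simp only [Finset.mem_Icc] at *; omega
  have hstart : φ 1 0 = 1 := by
    have hz : ∀ i ∈ Icc 1 (n-1), tauOf G 1 0 i = 0 := by
      intro i hi
      have := (hG i (hsub i hi)).1
      simp [tauOf, this]
    rw [hφ]
    simp only
    rw [probLt_of_zero hz hk, eMinBer_of_zero hz]
    norm_num
  have hend : φ m 1 = -1 := by
    have ho : ∀ i ∈ Icc 1 (n-1), tauOf G m 1 i = 1 := by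
      intro i hi
      have := (hG i (hsub i hi)).2.1
      simp [tauOf, this]
    rw [hφ]
    simp only
    rw [probLt_of_one ho, eMinBer_of_one ho, if_neg (by omega : ¬ n - 1 < k)]
    have : min (n-1) k = k := by omega
    rw [this]
    have hk0 : (0:ℝ) < k := by exact_mod_cast hk
    field_simp
    norm_num
  have main : ∀ J, 1 ≤ J → J ≤ m →
      ((∀ ρ ∈ Set.Icc (0:ℝ) 1, 0 < φ J ρ) ∨
       (∃ J' ∈ Finset.Icc 1 m, ∃ ρ' ∈ Set.Ioc (0:ℝ) 1, φ J' ρ' = 0)) := by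
    intro J hJ1
    induction J, hJ1 using Nat.le_induction with
    | base =>
      intro h1m
      by_cases hc : ∀ ρ ∈ Set.Icc (0:ℝ) 1, 0 < φ 1 ρ
      · exact Or.inl hc
      · right
        push_neg at hc
        obtain ⟨ρ₁, hρ₁, hneg⟩ := hc
        have hIVT := intermediate_value_Icc' hρ₁.1 ((hcont 1).continuousOn)
        have h0 : (0:ℝ) ∈ Set.Icc (φ 1 ρ₁) (φ 1 0) := ⟨hneg, by rw [hstart]; norm_num⟩
        obtain ⟨ρ₀, hρ₀mem, hρ₀⟩ := hIVT h0
        refine ⟨1, by simp only [Finset.mem_Icc]; omega, ρ₀, ⟨?_, le_trans hρ₀mem.2 hρ₁.2⟩, hρ₀⟩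
        rcases eq_or_lt_of_le hρ₀mem.1 with h | h
        · exfalso; rw [← h, hstart] at hρ₀; norm_num at hρ₀
        · exact h
    | succ J hJ1 ih =>
      intro hJm1
      rcases ih (by omega) with hall | hdone
      · by_cases hc : ∀ ρ ∈ Set.Icc (0:ℝ) 1, 0 < φ (J+1) ρ
        · exact Or.inl hc
        · right
          push_neg at hc
          obtain ⟨ρ₁, hρ₁, hneg⟩ := hc
          have hglue : φ (J+1) 0 = φ J 1 := by
            rw [hφ]; simp only [tau_glue]
          have hpos : 0 < φ (J+1) 0 := by
            rw [hglue]; exact hall 1 ⟨zero_le_one, le_rfl⟩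
          have hIVT := intermediate_value_Icc' hρ₁.1 ((hcont (J+1)).continuousOn)
          have h0 : (0:ℝ) ∈ Set.Icc (φ (J+1) ρ₁) (φ (J+1) 0) := ⟨hneg, le_of_lt hpos⟩
          obtain ⟨ρ₀, hρ₀mem, hρ₀⟩ := hIVT h0
          refine ⟨J+1, by simp only [Finset.mem_Icc]; omega, ρ₀,
            ⟨?_, le_trans hρ₀mem.2 hρ₁.2⟩, hρ₀⟩
          rcases eq_or_lt_of_le hρ₀mem.1 with h | h
          · exfalso; rw [← h] at hρ₀; linarith
          · exact h
      · exact Or.inr hdone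
  rcases main m hm le_rfl with hall | hdone
  · exfalso
    have := hall 1 ⟨zero_le_one, le_rfl⟩
    rw [hend] at this
    norm_num at this
  · obtain ⟨J', hJ', ρ', hρ', hzero⟩ := hdone
    refine ⟨J', hJ', ρ', hρ', ?_⟩
    rw [hφ] at hzero
    simp only at hzero
    linarith


lemma hard_case12 {k n : ℕ} (hk : 1 ≤ k) (hkn : k < n) {G' : ℕ → ℕ → ℝ}
    (hG' : IsTypeDist n 3 G') {t : ℕ → ℝ} {q : ℝ}
    (ht : ∀ i ∈ Icc 1 (n-1), 0 ≤ t i ∧ t i ≤ 1)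
    (hcross : probLt t (n-1) k = eMinBer t (n-1) k / k)
    (hq0 : 0 < q) (hq1 : q ≤ 1)
    {J : ℕ} {ρ : ℝ} (hJ : J ∈ Icc 1 3) (hρ0 : 0 ≤ ρ) (hρ1 : ρ ≤ 1)
    (hle : ∀ i ∈ Icc 1 (n-1), tauOf G' J ρ i ≤ t i) (hlen : tauOf G' J ρ n ≤ q) :
    innerLP_OST k n 3 G' J ρ (QProph k n G') ≤ probLt t (n-1) k + q / k := by
  have hk0 : (0:ℝ) < k := by exact_mod_cast hk
  have hg0 : 0 ≤ probLt t (n-1) k := probLt_nonneg ht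
  have hτ := tau_mem hG' hJ hρ0 hρ1
  have h3m : (3:ℕ) ∈ Icc 1 3 := by simp
  have hQ3 : QProph k n G' 3 = (k:ℝ) := QProph_m hG' (by omega)
  set τ'' : ℕ → ℝ := fun i => if i = n then q else t i with hτ''
  have hτ''mem : ∀ i ∈ Icc 1 n, 0 ≤ τ'' i ∧ τ'' i ≤ 1 := by
    intro i hi
    simp only [Finset.mem_Icc] at hi
    rw [hτ'']
    by_cases h : i = n
    · simp only [if_pos h]; exact ⟨le_of_lt hq0, hq1⟩
    · simp only [if_neg h]
      exact ht i (by simp only [Finset.mem_Icc]; omega)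
  apply innerLP_le hk hτ h3m (by rw [hQ3]; exact hk0) (by positivity)
  have hcsum3 : ∑ i ∈ Icc 1 n, min (tauOf G' J ρ i) (G' i 3) * probLt (tauOf G' J ρ) (i-1) k
      = eMinBer (tauOf G' J ρ) n k := by
    rw [eMinBer_eq_sum]
    apply Finset.sum_congr rfl
    intro i hi
    congr 1
    apply min_eq_left
    rw [(hG' i hi).2.1]
    exact (hτ i hi).2
  rw [hcsum3, hQ3]
  have hle' : ∀ i ∈ Icc 1 n, tauOf G' J ρ i ≤ τ'' i := by
    intro i hi
    simp only [Finset.mem_Icc] at hi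
    rw [hτ'']
    by_cases h : i = n
    · simp only [if_pos h]; rw [h]; exact hlen
    · simp only [if_neg h]
      exact hle i (by simp only [Finset.mem_Icc]; omega)
  have step1 : eMinBer (tauOf G' J ρ) n k ≤ eMinBer τ'' n k :=
    eMinBer_mono_p (fun i hi => (hτ i hi).1) (fun i hi => (hτ''mem i hi).2) hle' k
  have step2 : eMinBer τ'' n k ≤ eMinBer τ'' (n-1) k + τ'' n := by
    have hrw : n = (n-1) + 1 := by omega
    rw [hrw]
    apply eMinBer_succ_le
    intro a ha
    apply hτ''mem
    rw [hrw]; exact ha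
  have step3 : eMinBer τ'' (n-1) k = eMinBer t (n-1) k := by
    apply eMinBer_congr
    intro i hi
    simp only [Finset.mem_Icc] at hi
    rw [hτ'']
    simp only [if_neg (by omega : ¬ i = n)]
  have step4 : τ'' n = q := by rw [hτ'']; simp
  have step5 : eMinBer t (n-1) k = probLt t (n-1) k * k := by
    rw [hcross]; field_simp
  have : (probLt t (n-1) k + q / k) * k = probLt t (n-1) k * k + q := by
    field_simp
  rw [this]
  linarith

lemma hard_instance {k n : ℕ} (hk : 1 ≤ k) (hkn : k < n) {t : ℕ → ℝ}
    (ht : ∀ i ∈ Icc 1 (n-1), 0 ≤ t i ∧ t i ≤ 1)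
    (hcross : probLt t (n-1) k = eMinBer t (n-1) k / k)
    {q : ℝ} (hq0 : 0 < q) (hq1 : q ≤ 1) :
    ∃ G' : ℕ → ℕ → ℝ, IsTypeDist n 3 G' ∧
      ∀ w ∈ {w : ℝ | ∃ J ∈ Finset.Icc 1 3, ∃ ρ ∈ Set.Ioc (0:ℝ) 1,
        w = innerLP_OST k n 3 G' J ρ (QProph k n G')},
        w ≤ probLt t (n-1) k + q / k := by
  have hk0 : (0:ℝ) < k := by exact_mod_cast hk
  set G' : ℕ → ℕ → ℝ := fun i j =>
    if j = 0 then 0 else if j = 1 then (if i = n then q else 0)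
    else if j = 2 then (if i = n then q else t i) else 1 with hG'def
  have hG'0 : ∀ i, G' i 0 = 0 := fun i => by simp [hG'def]
  have hG'1 : ∀ i, G' i 1 = if i = n then q else 0 := fun i => by simp [hG'def]
  have hG'2 : ∀ i, G' i 2 = if i = n then q else t i := fun i => by simp [hG'def]
  have hG'3 : ∀ i, G' i 3 = 1 := fun i => by simp [hG'def]
  have hmemt : ∀ i, 1 ≤ i → i ≤ n → ¬ i = n → (0 ≤ t i ∧ t i ≤ 1) := by
    intro i h1 h2 h3
    exact ht i (by simp only [Finset.mem_Icc]; omega)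
  have hG' : IsTypeDist n 3 G' := by
    intro i hi
    simp only [Finset.mem_Icc] at hi
    refine ⟨hG'0 i, hG'3 i, ?_⟩
    intro j hj
    simp only [Finset.mem_Icc] at hj
    obtain ⟨hj1, hj2⟩ := hj
    interval_cases j
    · rw [show (1:ℕ) - 1 = 0 from rfl, hG'0, hG'1]
      split
      · linarith
      · exact le_rfl
    · rw [show (2:ℕ) - 1 = 1 from rfl, hG'1, hG'2]
      by_cases h : i = n
      · simp only [if_pos h]; exact le_rfl
      · simp only [if_neg h]
        exact (hmemt i hi.1 hi.2 h).1
    · rw [show (3:ℕ) - 1 = 2 from rfl, hG'2, hG'3]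
      by_cases h : i = n
      · simp only [if_pos h]; exact hq1
      · simp only [if_neg h]
        exact (hmemt i hi.1 hi.2 h).2
  refine ⟨G', hG', ?_⟩
  rintro w ⟨J, hJ, ρ, hρ, rfl⟩
  have hρ0 : (0:ℝ) ≤ ρ := le_of_lt hρ.1
  have hρ1 : ρ ≤ 1 := hρ.2
  have hnmem : n ∈ Icc 1 n := by simp only [Finset.mem_Icc]; omega
  have hJ' := hJ
  simp only [Finset.mem_Icc] at hJ'
  obtain ⟨hJ1, hJ2⟩ := hJ'
  have hq0' : (0:ℝ) ≤ q := le_of_lt hq0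
  interval_cases J
  · -- J = 1
    apply hard_case12 hk hkn hG' ht hcross hq0 hq1 hJ hρ0 hρ1
    · intro i hi
      simp only [Finset.mem_Icc] at hi
      unfold tauOf
      rw [show (1:ℕ) - 1 = 0 from rfl, hG'0, hG'1, if_neg (by omega : ¬ i = n)]
      have := (ht i (by simp only [Finset.mem_Icc]; omega)).1
      nlinarith
    · unfold tauOf
      rw [show (1:ℕ) - 1 = 0 from rfl, hG'0, hG'1, if_pos rfl]
      nlinarith
  · -- J = 2
    apply hard_case12 hk hkn hG' ht hcross hq0 hq1 hJ hρ0 hρ1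
    · intro i hi
      simp only [Finset.mem_Icc] at hi
      unfold tauOf
      rw [show (2:ℕ) - 1 = 1 from rfl, hG'1, hG'2,
        if_neg (by omega : ¬ i = n), if_neg (by omega : ¬ i = n)]
      have := (ht i (by simp only [Finset.mem_Icc]; omega)).1
      have := (ht i (by simp only [Finset.mem_Icc]; omega)).2
      nlinarith
    · unfold tauOf
      rw [show (2:ℕ) - 1 = 1 from rfl, hG'1, hG'2, if_pos rfl, if_pos rfl]
      nlinarith
  · -- J = 3
    have hτ := tau_mem hG' hJ hρ0 hρ1
    have h1m : (1:ℕ) ∈ Icc 1 3 := by simp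
    have hQ1 : QProph k n G' 1 = q := by
      unfold QProph
      rw [eMinBer_eq_sum, Finset.sum_eq_single_of_mem n hnmem
        (fun i _ hne => by rw [hG'1, if_neg hne]; ring)]
      rw [hG'1, if_pos rfl,
        probLt_of_zero (fun i hi => by
          simp only [Finset.mem_Icc] at hi
          rw [hG'1, if_neg (by omega : ¬ i = n)]) hk]
      ring
    have hg0 : 0 ≤ probLt t (n-1) k := probLt_nonneg ht
    have hbnd : innerLP_OST k n 3 G' 3 ρ (QProph k n G') ≤ probLt t (n-1) k := by
      apply innerLP_le hk hτ h1m (by rw [hQ1]; exact hq0) hg0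
      rw [hQ1]
      have heval : ∑ i ∈ Icc 1 n, min (tauOf G' 3 ρ i) (G' i 1) * probLt (tauOf G' 3 ρ) (i-1) k
          = q * probLt (tauOf G' 3 ρ) (n-1) k := by
        rw [Finset.sum_eq_single_of_mem n hnmem
          (fun i hi hne => by
            rw [hG'1, if_neg hne, min_eq_right (hτ i hi).1, zero_mul])]
        congr 1
        rw [hG'1, if_pos rfl]
        apply min_eq_right
        unfold tauOf
        rw [show (3:ℕ) - 1 = 2 from rfl, hG'2, hG'3, if_pos rfl]
        nlinarith
      rw [heval]
      have hanti : probLt (tauOf G' 3 ρ) (n-1) k ≤ probLt t (n-1) k := by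
        apply probLt_anti_p (fun i hi => (ht i hi).1)
          (fun i hi => (hτ i (by simp only [Finset.mem_Icc] at *; omega)).2)
        intro i hi
        simp only [Finset.mem_Icc] at hi
        unfold tauOf
        rw [show (3:ℕ) - 1 = 2 from rfl, hG'2, hG'3, if_neg (by omega : ¬ i = n)]
        have h1 := (ht i (by simp only [Finset.mem_Icc]; omega)).1
        have h2 := (ht i (by simp only [Finset.mem_Icc]; omega)).2
        nlinarith
      calc q * probLt (tauOf G' 3 ρ) (n-1) k ≤ q * probLt t (n-1) k :=
            mul_le_mul_of_nonneg_left hanti hq0'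
        _ = probLt t (n-1) k * q := mul_comm _ _
    have : 0 < q / k := by positivity
    linarith


lemma WC_facts {k n m : ℕ} {G : ℕ → ℕ → ℝ} (hG : IsTypeDist n m G)
    (hk : 1 ≤ k) (hkn : k < n) (hm : 1 ≤ m) :
    BddAbove {w : ℝ | ∃ J ∈ Finset.Icc 1 m, ∃ ρ ∈ Set.Ioc (0:ℝ) 1,
      w = min (probLt (tauOf G J ρ) (n-1) k) (eMinBer (tauOf G J ρ) (n-1) k / k)}
    ∧ {w : ℝ | ∃ J ∈ Finset.Icc 1 m, ∃ ρ ∈ Set.Ioc (0:ℝ) 1,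
      w = min (probLt (tauOf G J ρ) (n-1) k) (eMinBer (tauOf G J ρ) (n-1) k / k)}.Nonempty
    ∧ 0 ≤ sSup {w : ℝ | ∃ J ∈ Finset.Icc 1 m, ∃ ρ ∈ Set.Ioc (0:ℝ) 1,
      w = min (probLt (tauOf G J ρ) (n-1) k) (eMinBer (tauOf G J ρ) (n-1) k / k)} := by
  have h1m : (1:ℕ) ∈ Icc 1 m := by simp only [Finset.mem_Icc]; omega
  have hτ' : ∀ (J : ℕ), J ∈ Icc 1 m → ∀ (ρ : ℝ), 0 ≤ ρ → ρ ≤ 1 →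
      ∀ i ∈ Icc 1 (n-1), 0 ≤ tauOf G J ρ i ∧ tauOf G J ρ i ≤ 1 := by
    intro J hJ ρ h0 h1 i hi
    apply tau_mem hG hJ h0 h1
    simp only [Finset.mem_Icc] at *; omega
  have hbA : BddAbove {w : ℝ | ∃ J ∈ Finset.Icc 1 m, ∃ ρ ∈ Set.Ioc (0:ℝ) 1,
      w = min (probLt (tauOf G J ρ) (n-1) k) (eMinBer (tauOf G J ρ) (n-1) k / k)} := by
    refine ⟨1, ?_⟩
    rintro w ⟨J, hJ, ρ, hρ, rfl⟩
    exact fVal_le_one (hτ' J hJ ρ (le_of_lt hρ.1) hρ.2)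
  have hmem : min (probLt (tauOf G 1 1) (n-1) k) (eMinBer (tauOf G 1 1) (n-1) k / k)
      ∈ {w : ℝ | ∃ J ∈ Finset.Icc 1 m, ∃ ρ ∈ Set.Ioc (0:ℝ) 1,
      w = min (probLt (tauOf G J ρ) (n-1) k) (eMinBer (tauOf G J ρ) (n-1) k / k)} :=
    ⟨1, h1m, 1, ⟨zero_lt_one, le_rfl⟩, rfl⟩
  refine ⟨hbA, ⟨_, hmem⟩, ?_⟩
  calc (0:ℝ) ≤ min (probLt (tauOf G 1 1) (n-1) k) (eMinBer (tauOf G 1 1) (n-1) k / k) :=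
        fVal_nonneg (hτ' 1 h1m 1 zero_le_one le_rfl)
    _ ≤ _ := le_csSup hbA hmem


theorem stmt9 (k n : ℕ) (hk : 1 ≤ k) (hkn : k < n) :
    (sInf {v : ℝ | ∃ m, 1 ≤ m ∧ ∃ G, IsTypeDist n m G ∧
        v = sSup {w : ℝ | ∃ J ∈ Finset.Icc 1 m, ∃ ρ ∈ Set.Ioc (0:ℝ) 1,
          w = innerLP_OST k n m G J ρ (QProph k n G)}}
      = sInf {v : ℝ | ∃ m, 1 ≤ m ∧ ∃ G, IsTypeDist n m G ∧
          v = sSup {w : ℝ | ∃ J ∈ Finset.Icc 1 m, ∃ ρ ∈ Set.Ioc (0:ℝ) 1,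
            w = innerLP_OST k n m G J ρ (QExAnte k n G)}}) ∧
    (sInf {v : ℝ | ∃ m, 1 ≤ m ∧ ∃ G, IsTypeDist n m G ∧
        v = sSup {w : ℝ | ∃ J ∈ Finset.Icc 1 m, ∃ ρ ∈ Set.Ioc (0:ℝ) 1,
          w = innerLP_OST k n m G J ρ (QExAnte k n G)}}
      = sInf {v : ℝ | ∃ m, 1 ≤ m ∧ ∃ G, IsTypeDist n m G ∧
          v = sSup {w : ℝ | ∃ J ∈ Finset.Icc 1 m, ∃ ρ ∈ Set.Ioc (0:ℝ) 1,
            w = min (probLt (tauOf G J ρ) (n-1) k)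
                    (eMinBer (tauOf G J ρ) (n-1) k / k)}}) := by
  have hkn' : k ≤ n := le_of_lt hkn
  -- the default instance for nonemptiness
  set G₀ : ℕ → ℕ → ℝ := fun _ j => if j = 0 then 0 else 1 with hG₀def
  have hG₀ : IsTypeDist n 1 G₀ := by
    intro i hi
    refine ⟨by simp [hG₀def], by simp [hG₀def], ?_⟩
    intro j hj
    simp only [Finset.mem_Icc] at hj
    have : j = 1 := by omega
    subst this
    simp [hG₀def]
  -- the three sets
  set S1 := {v : ℝ | ∃ m, 1 ≤ m ∧ ∃ G, IsTypeDist n m G ∧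
      v = sSup {w : ℝ | ∃ J ∈ Finset.Icc 1 m, ∃ ρ ∈ Set.Ioc (0:ℝ) 1,
        w = innerLP_OST k n m G J ρ (QProph k n G)}} with hS1
  set S2 := {v : ℝ | ∃ m, 1 ≤ m ∧ ∃ G, IsTypeDist n m G ∧
      v = sSup {w : ℝ | ∃ J ∈ Finset.Icc 1 m, ∃ ρ ∈ Set.Ioc (0:ℝ) 1,
        w = innerLP_OST k n m G J ρ (QExAnte k n G)}} with hS2
  set S3 := {v : ℝ | ∃ m, 1 ≤ m ∧ ∃ G, IsTypeDist n m G ∧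
      v = sSup {w : ℝ | ∃ J ∈ Finset.Icc 1 m, ∃ ρ ∈ Set.Ioc (0:ℝ) 1,
        w = min (probLt (tauOf G J ρ) (n-1) k)
                (eMinBer (tauOf G J ρ) (n-1) k / k)}} with hS3
  have hS1ne : S1.Nonempty := ⟨_, 1, le_rfl, G₀, hG₀, rfl⟩
  have hS2ne : S2.Nonempty := ⟨_, 1, le_rfl, G₀, hG₀, rfl⟩
  have hS3ne : S3.Nonempty := ⟨_, 1, le_rfl, G₀, hG₀, rfl⟩
  have hS1bb : BddBelow S1 := by
    refine ⟨0, ?_⟩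
    rintro v ⟨m, hm, G, hG, rfl⟩
    exact (W_facts hG hk hkn hm (QProph_facts hG) (QProph_m hG hkn')).2.2
  have hS2bb : BddBelow S2 := by
    refine ⟨0, ?_⟩
    rintro v ⟨m, hm, G, hG, rfl⟩
    exact (W_facts hG hk hkn hm (QExAnte_facts hG) (QExAnte_m hG hkn')).2.2
  have hS3bb : BddBelow S3 := by
    refine ⟨0, ?_⟩
    rintro v ⟨m, hm, G, hG, rfl⟩
    exact (WC_facts hG hk hkn hm).2.2
  -- I2 ≤ I1
  have h21 : sInf S2 ≤ sInf S1 := by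
    apply le_csInf hS1ne
    rintro v ⟨m, hm, G, hG, rfl⟩
    have hWP := W_facts hG hk hkn hm (QProph_facts hG) (QProph_m hG hkn')
    have hvE_le : sSup {w : ℝ | ∃ J ∈ Finset.Icc 1 m, ∃ ρ ∈ Set.Ioc (0:ℝ) 1,
        w = innerLP_OST k n m G J ρ (QExAnte k n G)}
        ≤ sSup {w : ℝ | ∃ J ∈ Finset.Icc 1 m, ∃ ρ ∈ Set.Ioc (0:ℝ) 1,
        w = innerLP_OST k n m G J ρ (QProph k n G)} := by
      apply Real.sSup_le _ hWP.2.2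
      rintro w ⟨J, hJ, ρ, hρ, rfl⟩
      refine le_trans ?_ (le_csSup hWP.1 ⟨J, hJ, ρ, hρ, rfl⟩)
      exact innerLP_mono_Q hG hk hkn hm hJ (le_of_lt hρ.1) hρ.2
        (QProph_facts hG) (QProph_m hG hkn') (QProph_le_QExAnte hG)
    refine le_trans (csInf_le hS2bb ⟨m, hm, G, hG, rfl⟩) hvE_le
  -- I3 ≤ I2
  have h32 : sInf S3 ≤ sInf S2 := by
    apply le_csInf hS2ne
    rintro v ⟨m, hm, G, hG, rfl⟩
    have hWE := W_facts hG hk hkn hm (QExAnte_facts hG) (QExAnte_m hG hkn')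
    have hvC_le : sSup {w : ℝ | ∃ J ∈ Finset.Icc 1 m, ∃ ρ ∈ Set.Ioc (0:ℝ) 1,
        w = min (probLt (tauOf G J ρ) (n-1) k) (eMinBer (tauOf G J ρ) (n-1) k / k)}
        ≤ sSup {w : ℝ | ∃ J ∈ Finset.Icc 1 m, ∃ ρ ∈ Set.Ioc (0:ℝ) 1,
        w = innerLP_OST k n m G J ρ (QExAnte k n G)} := by
      apply Real.sSup_le _ hWE.2.2
      rintro w ⟨J, hJ, ρ, hρ, rfl⟩
      refine le_trans ?_ (le_csSup hWE.1 ⟨J, hJ, ρ, hρ, rfl⟩)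
      exact (innerLP_both hG hk hkn hm hJ (le_of_lt hρ.1) hρ.2
        (QExAnte_facts hG) (QExAnte_m hG hkn')).1
    refine le_trans (csInf_le hS3bb ⟨m, hm, G, hG, rfl⟩) hvC_le
  -- I1 ≤ I3
  have h13 : sInf S1 ≤ sInf S3 := by
    apply le_csInf hS3ne
    rintro v ⟨m, hm, G, hG, rfl⟩
    apply le_of_forall_pos_le_add
    intro ε hε
    obtain ⟨J', hJ', ρ', hρ', hcr⟩ := crossing hG hk hkn hm
    have ht : ∀ i ∈ Icc 1 (n-1), 0 ≤ tauOf G J' ρ' i ∧ tauOf G J' ρ' i ≤ 1 := by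
      intro i hi
      apply tau_mem hG hJ' (le_of_lt hρ'.1) hρ'.2
      simp only [Finset.mem_Icc] at *; omega
    set q : ℝ := min ε 1 with hqdef
    have hq0 : 0 < q := lt_min hε one_pos
    have hq1 : q ≤ 1 := min_le_right _ _
    obtain ⟨G', hG', hball⟩ := hard_instance hk hkn ht hcr hq0 hq1
    have hWC := WC_facts hG hk hkn hm
    have hmemWC : probLt (tauOf G J' ρ') (n-1) k
        ∈ {w : ℝ | ∃ J ∈ Finset.Icc 1 m, ∃ ρ ∈ Set.Ioc (0:ℝ) 1,
          w = min (probLt (tauOf G J ρ) (n-1) k) (eMinBer (tauOf G J ρ) (n-1) k / k)} := by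
      refine ⟨J', hJ', ρ', hρ', ?_⟩
      rw [← hcr, min_self]
    have hS1mem : sSup {w : ℝ | ∃ J ∈ Finset.Icc 1 3, ∃ ρ ∈ Set.Ioc (0:ℝ) 1,
        w = innerLP_OST k n 3 G' J ρ (QProph k n G')} ∈ S1 :=
      ⟨3, by omega, G', hG', rfl⟩
    have hqk : q / k ≤ ε := by
      have h1k : (1:ℝ) ≤ k := by exact_mod_cast hk
      calc q / k ≤ q / 1 := by
            apply div_le_div_of_nonneg_left (le_of_lt hq0) zero_lt_one h1k
        _ = q := div_one q
        _ ≤ ε := min_le_left _ _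
    calc sInf S1 ≤ _ := csInf_le hS1bb hS1mem
      _ ≤ probLt (tauOf G J' ρ') (n-1) k + q / k := by
          apply Real.sSup_le hball
          have h0 := probLt_nonneg (k := k) ht
          positivity
      _ ≤ sSup {w : ℝ | ∃ J ∈ Finset.Icc 1 m, ∃ ρ ∈ Set.Ioc (0:ℝ) 1,
            w = min (probLt (tauOf G J ρ) (n-1) k)
              (eMinBer (tauOf G J ρ) (n-1) k / k)} + ε := by
          have h1 := le_csSup hWC.1 hmemWC
          linarith
  exact ⟨le_antisymm (le_trans h13 h32) h21, le_antisymm (le_trans h21 h13) h32⟩
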